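/- arXiv:2104.10633 — 7 statements merged into one kernel-verified Lean document; each statement's English description precedes it below -/
import Mathlib

section
/- Suppose Z is independent of the collection {V_1, …, V_m; U_0, …, U_n}, in the sense that the random variable Z is independent of the random variable ω ↦ ((V_1(ω), …, V_m(ω)), (U_0(ω), …, U_n(ω))). Then for every i ∈ {1, …, m} with P(Z = i) > 0, E[Y · 1(Z = i)] = P(Z = i) · E[U_{V_i}]; in other words, the conditional expectation E(Y | Z = i) equals E[U_{V_i}]. -/
open MeasureTheory

/-- If `Z` is independent of the collection `{V_1,…,V_m; U_0,…,U_n}`, then for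
every `i` with `P(Z = i) > 0`, `E[Y · 1(Z = i)] = P(Z = i) · E[U_{V i}]`, i.e.
`E(Y | Z = i) = E[U_{V i}]`. -/
theorem stmt_1 {Ω : Type*} [MeasureSpace Ω] [IsProbabilityMeasure (volume : Measure Ω)]
    (n m : ℕ) (hn : 1 ≤ n) (hm : 1 ≤ m)
    (Z : Ω → Fin m) (hZ : Measurable Z)
    (V : Fin m → Ω → Fin (n + 1)) (hV : ∀ i, Measurable (V i))
    (U : Fin (n + 1) → Ω → ℝ) (hU : ∀ j, Integrable (U j)) (hUmeas : ∀ j, Measurable (U j))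
    (hprod : ∀ i j j', Integrable (fun ω => (if V i ω = j then (1 : ℝ) else 0) * U j' ω))
    (X : Ω → Fin (n + 1)) (hX : ∀ ω, X ω = V (Z ω) ω)
    (Y : Ω → ℝ) (hY : ∀ ω, Y ω = U (X ω) ω)
    (hindep : ProbabilityTheory.IndepFun Z
      (fun ω => ((fun i => V i ω, fun j => U j ω) :
        (Fin m → Fin (n + 1)) × (Fin (n + 1) → ℝ))) volume) :
    ∀ i : Fin m, 0 < volume {ω | Z ω = i} →
      ∫ ω, (if Z ω = i then Y ω else 0)
        = (volume {ω | Z ω = i}).toReal * ∫ ω, U (V i ω) ω := by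
  intro i _
  set f : Ω → ℝ := fun ω => if Z ω = i then 1 else 0 with hf
  set g : Ω → ℝ := fun ω => U (V i ω) ω with hg
  have hgmeas : Measurable g := by
    have : g = fun ω => ∑ j : Fin (n + 1), if V i ω = j then U j ω else 0 := by
      funext ω
      rw [Finset.sum_eq_single (V i ω)]
      · simp [hg]
      · intro b _ hb; simp [Ne.symm hb]
      · simp
    rw [this]
    exact Finset.measurable_sum _ fun j _ =>
      Measurable.ite ((hV i) (measurableSet_singleton j)) (hUmeas j) measurable_const
  have hfg : ProbabilityTheory.IndepFun f g volume := by
    have hφ : Measurable (fun z : Fin m => if z = i then (1 : ℝ) else 0) :=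
      measurable_of_finite _
    have hψ : Measurable (fun p : (Fin m → Fin (n + 1)) × (Fin (n + 1) → ℝ) => p.2 (p.1 i)) := by
      have : (fun p : (Fin m → Fin (n + 1)) × (Fin (n + 1) → ℝ) => p.2 (p.1 i))
          = fun p => ∑ j : Fin (n + 1), if p.1 i = j then p.2 j else 0 := by
        funext p
        rw [Finset.sum_eq_single (p.1 i)]
        · simp
        · intro b _ hb; simp [Ne.symm hb]
        · simp
      rw [this]
      refine Finset.measurable_sum _ fun j _ => Measurable.ite ?_ ?_ measurable_const
      · have h1 : Measurable fun p : (Fin m → Fin (n + 1)) × (Fin (n + 1) → ℝ) => p.1 i :=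
          (measurable_pi_apply i).comp measurable_fst
        exact h1 (measurableSet_singleton j)
      · exact (measurable_pi_apply j).comp measurable_snd
    exact hindep.comp hφ hψ
  have hfmeas : Measurable f :=
    (measurable_of_finite (fun z : Fin m => if z = i then (1 : ℝ) else 0)).comp hZ
  have key : ∫ ω, f ω * g ω = (∫ ω, f ω) * ∫ ω, g ω :=
    hfg.integral_fun_mul_eq_mul_integral hfmeas.aestronglyMeasurable hgmeas.aestronglyMeasurable
  have h1 : ∫ ω, (if Z ω = i then Y ω else 0) = ∫ ω, f ω * g ω := by
    refine integral_congr_ae (Filter.Eventually.of_forall fun ω => ?_)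
    by_cases h : Z ω = i
    · simp only [hf, hg, h, if_pos, one_mul, hY, hX, h]
    · simp [hf, h]
  have h2 : ∫ ω, f ω = (volume {ω | Z ω = i}).toReal := by
    have hs : {ω | Z ω = i} = Z ⁻¹' {i} := rfl
    have : f = Set.indicator (Z ⁻¹' {i}) (fun _ => (1 : ℝ)) := by
      funext ω; by_cases h : Z ω = i <;> simp [hf, h, Set.indicator]
    rw [this, integral_indicator (hZ (measurableSet_singleton i)), hs]
    simp
    rfl
  rw [h1, key, h2]
end

section
/- (Theorem 1.) Suppose Z is independent of {V_1, …, V_m; U_0, …, U_n} (that is, Z is independent of the random variable ω ↦ ((V_1(ω), …, V_m(ω)), (U_0(ω), …, U_n(ω)))), that P(Z = i) > 0 for every i, and that there is a set S_0 of unordered pairs {i, k} ⊂ {1, …, m} such that (i) for every {i, k} ∈ S_0 and every j ∈ {1, …, n}, E[(U_j − U_0) · (1(V_i = j) − 1(V_k = j))] = E[U_j − U_0] · E[1(V_i = j) − 1(V_k = j)] (zero correlation), and (ii) the matrix A = (a_{s j})_{s ∈ S_0, j ∈ {1,…,n}} has rank at least n (equivalently, the linear map v ↦ A v from ℝⁿ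 to ℝ^{S_0} is injective). Then A θ = b, and θ is the unique vector c ∈ ℝⁿ satisfying A c = b; hence θ is identifiable from the joint distribution of (X, Y, Z). -/
open MeasureTheory

private lemma aux_ind_eq {Ω : Type*} (p : Ω → Prop) [DecidablePred p] :
    (fun ω => if p ω then (1:ℝ) else 0) = Set.indicator {ω | p ω} (fun _ => 1) := by
  funext ω; by_cases h : p ω <;> simp [Set.indicator_apply, h]

private lemma aux_int {Ω : Type*} [MeasureSpace Ω] [IsFiniteMeasure (volume : Measure Ω)]
    (p : Ω → Prop) [DecidablePred p] (hp : MeasurableSet {ω | p ω}) :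
    Integrable (fun ω => if p ω then (1:ℝ) else 0) := by
  rw [aux_ind_eq p]; exact (integrable_const 1).indicator hp

private lemma aux_eq {Ω : Type*} [MeasureSpace Ω] [IsFiniteMeasure (volume : Measure Ω)]
    (p : Ω → Prop) [DecidablePred p] (hp : MeasurableSet {ω | p ω}) :
    ∫ ω, (if p ω then (1:ℝ) else 0) = (volume {ω | p ω}).toReal := by
  rw [aux_ind_eq p, integral_indicator_const _ hp]; simp [measureReal_def]

private lemma indep_factor {Ω γ : Type*} [MeasureSpace Ω]
    [IsProbabilityMeasure (volume : Measure Ω)] [MeasurableSpace γ]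
    {m : ℕ} {Z : Ω → Fin m} (hZ : Measurable Z) {T : Ω → γ}
    (hindep : ProbabilityTheory.IndepFun Z T volume) (i : Fin m)
    (ψ : γ → ℝ) (hψ : Measurable ψ) (hint : Integrable (fun ω => ψ (T ω))) :
    ∫ ω, (if Z ω = i then (1:ℝ) else 0) * ψ (T ω)
      = (volume {ω | Z ω = i}).toReal * ∫ ω, ψ (T ω) := by
  classical
  have hZi : MeasurableSet {ω | Z ω = i} := hZ (measurableSet_singleton i)
  have hφ : Measurable (fun z : Fin m => if z = i then (1:ℝ) else 0) :=
    measurable_of_countable _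
  have hI : ProbabilityTheory.IndepFun (fun ω => if Z ω = i then (1:ℝ) else 0)
      (fun ω => ψ (T ω)) volume := hindep.comp hφ hψ
  have h := hI.integral_fun_mul_eq_mul_integral (aux_int _ hZi).aestronglyMeasurable hint.aestronglyMeasurable
  calc ∫ ω, (if Z ω = i then (1:ℝ) else 0) * ψ (T ω)
      = (∫ ω, (if Z ω = i then (1:ℝ) else 0)) * ∫ ω, ψ (T ω) := h
    _ = (volume {ω | Z ω = i}).toReal * ∫ ω, ψ (T ω) := by rw [aux_eq _ hZi]

/-- Theorem 1: Under independence of `Z` from `{V_1,…,V_m; U_0,…,U_n}`,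
positivity of `P(Z = i)`, the zero-correlation condition (i) on `S₀`, and the rank
condition (ii), the causal effect vector `θ` (with `θ_j = E[U_j − U_0]`) satisfies `A θ = b`
and is the unique solution of this linear system, hence identifiable. -/
theorem stmt_3 {Ω : Type*} [MeasureSpace Ω] [IsProbabilityMeasure (volume : Measure Ω)]
    (n m : ℕ) (hn : 1 ≤ n) (hm : 1 ≤ m)
    (Z : Ω → Fin m) (hZ : Measurable Z)
    (V : Fin m → Ω → Fin (n + 1)) (hV : ∀ i, Measurable (V i))
    (U : Fin (n + 1) → Ω → ℝ) (hU : ∀ j, Integrable (U j)) (hUmeas : ∀ j, Measurable (U j))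
    (hprod : ∀ i j j', Integrable (fun ω => (if V i ω = j then (1 : ℝ) else 0) * U j' ω))
    (X : Ω → Fin (n + 1)) (hX : ∀ ω, X ω = V (Z ω) ω)
    (Y : Ω → ℝ) (hY : ∀ ω, Y ω = U (X ω) ω)
    (hindep : ProbabilityTheory.IndepFun Z
      (fun ω => ((fun i => V i ω, fun j => U j ω) :
        (Fin m → Fin (n + 1)) × (Fin (n + 1) → ℝ))) volume)
    (hpos : ∀ i : Fin m, 0 < volume {ω | Z ω = i})
    (θ : Fin n → ℝ) (hθ : ∀ j : Fin n, θ j = ∫ ω, (U j.succ ω - U 0 ω))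
    (S₀ : Finset (Fin m × Fin m))
    (a : Fin m × Fin m → Fin n → ℝ)
    (ha : ∀ s j, a s j =
        (volume {ω | X ω = j.succ ∧ Z ω = s.1}).toReal / (volume {ω | Z ω = s.1}).toReal
      - (volume {ω | X ω = j.succ ∧ Z ω = s.2}).toReal / (volume {ω | Z ω = s.2}).toReal)
    (b : Fin m × Fin m → ℝ)
    (hb : ∀ s, b s =
        (∫ ω, (if Z ω = s.1 then Y ω else 0)) / (volume {ω | Z ω = s.1}).toReal
      - (∫ ω, (if Z ω = s.2 then Y ω else 0)) / (volume {ω | Z ω = s.2}).toReal)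
    -- condition (i): zero correlation of `U_j − U_0` with `1(V_i = j) − 1(V_k = j)`
    (hcorr : ∀ s ∈ S₀, ∀ j : Fin n,
      ∫ ω, (U j.succ ω - U 0 ω) *
          ((if V s.1 ω = j.succ then (1 : ℝ) else 0) - (if V s.2 ω = j.succ then (1 : ℝ) else 0))
        = (∫ ω, (U j.succ ω - U 0 ω)) *
          ∫ ω, ((if V s.1 ω = j.succ then (1 : ℝ) else 0)
            - (if V s.2 ω = j.succ then (1 : ℝ) else 0)))
    -- condition (ii): rank(A) ≥ n, i.e. the map `c ↦ A c` is injective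
    (hrank : Function.Injective
      (fun c : Fin n → ℝ => fun s : S₀ => ∑ j, a s.1 j * c j)) :
    (∀ s ∈ S₀, ∑ j, a s j * θ j = b s) ∧
      ∀ c : Fin n → ℝ, (∀ s ∈ S₀, ∑ j, a s j * c j = b s) → c = θ := by
  classical
  have hZm : ∀ i : Fin m, MeasurableSet {ω | Z ω = i} :=
    fun i => hZ (measurableSet_singleton i)
  have hVm : ∀ (i : Fin m) (j : Fin (n+1)), MeasurableSet {ω | V i ω = j} :=
    fun i j => hV i (measurableSet_singleton j)
  have hμ : ∀ i : Fin m, (volume {ω | Z ω = i}).toReal ≠ 0 := fun i =>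
    ENNReal.toReal_ne_zero.mpr ⟨(hpos i).ne', measure_ne_top _ _⟩
  -- E[Y 1(Z = i)] factorization
  have hbi : ∀ i : Fin m, ∫ ω, (if Z ω = i then Y ω else 0)
      = (volume {ω | Z ω = i}).toReal *
        ∑ j' : Fin (n+1), ∫ ω, (if V i ω = j' then (1:ℝ) else 0) * U j' ω := by
    intro i
    have hpt : (fun ω => if Z ω = i then Y ω else 0)
        = fun ω => (if Z ω = i then (1:ℝ) else 0) *
            ∑ j' : Fin (n+1), (if V i ω = j' then (1:ℝ) else 0) * U j' ω := by
      funext ω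
      by_cases h : Z ω = i
      · simp only [h, if_true, one_mul]
        rw [hY ω, hX ω, h]
        have hterm : ∀ j' : Fin (n+1),
            (if V i ω = j' then (1:ℝ) else 0) * U j' ω = if V i ω = j' then U j' ω else 0 := by
          intro j'; split_ifs <;> simp
        symm
        simp only [hterm]
        rw [Finset.sum_ite_eq Finset.univ (V i ω) (fun j' => U j' ω)]
        simp
      · simp [h]
    have hmeas : Measurable (fun p : (Fin m → Fin (n + 1)) × (Fin (n + 1) → ℝ) =>
        ∑ j' : Fin (n+1), (if p.1 i = j' then (1:ℝ) else 0) * p.2 j') := by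
      apply Finset.measurable_sum
      intro j' _
      exact ((measurable_of_countable (fun v : Fin (n+1) => if v = j' then (1:ℝ) else 0)).comp
        ((measurable_pi_apply i).comp measurable_fst)).mul
        ((measurable_pi_apply j').comp measurable_snd)
    have hint : Integrable (fun ω =>
        ∑ j' : Fin (n+1), (if V i ω = j' then (1:ℝ) else 0) * U j' ω) :=
      integrable_finset_sum _ (fun j' _ => hprod i j' j')
    have h : ∫ ω, (if Z ω = i then (1:ℝ) else 0) *
          ∑ j' : Fin (n+1), (if V i ω = j' then (1:ℝ) else 0) * U j' ω
        = (volume {ω | Z ω = i}).toReal *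
          ∫ ω, ∑ j' : Fin (n+1), (if V i ω = j' then (1:ℝ) else 0) * U j' ω :=
      indep_factor hZ hindep i
        (fun p => ∑ j' : Fin (n+1), (if p.1 i = j' then (1:ℝ) else 0) * p.2 j') hmeas hint
    rw [hpt, h, integral_finset_sum _ (fun j' _ => hprod i j' j')]
  have hSY : ∀ i : Fin m, (∫ ω, (if Z ω = i then Y ω else 0)) / (volume {ω | Z ω = i}).toReal
      = ∑ j' : Fin (n+1), ∫ ω, (if V i ω = j' then (1:ℝ) else 0) * U j' ω := by
    intro i; rw [hbi i, mul_div_cancel_left₀ _ (hμ i)]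
  -- P(X = j.succ, Z = i) factorization
  have haD : ∀ (i : Fin m) (j : Fin n),
      (volume {ω | X ω = j.succ ∧ Z ω = i}).toReal / (volume {ω | Z ω = i}).toReal
        = ∫ ω, (if V i ω = j.succ then (1:ℝ) else 0) := by
    intro i j
    have hmeas : MeasurableSet {ω | Z ω = i ∧ V i ω = j.succ} :=
      (hZm i).inter (hVm i j.succ)
    have hset : {ω | X ω = j.succ ∧ Z ω = i} = {ω | Z ω = i ∧ V i ω = j.succ} := by
      ext ω; simp only [Set.mem_setOf_eq, hX]
      constructor
      · rintro ⟨h1, h2⟩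
        subst h2
        exact ⟨rfl, h1⟩
      · rintro ⟨h2, h1⟩
        subst h2
        exact ⟨h1, rfl⟩
    have h1 : (volume {ω | Z ω = i ∧ V i ω = j.succ}).toReal
        = ∫ ω, (if Z ω = i then (1:ℝ) else 0) * (if V i ω = j.succ then (1:ℝ) else 0) := by
      rw [show (fun ω => (if Z ω = i then (1:ℝ) else 0) * (if V i ω = j.succ then (1:ℝ) else 0))
          = fun ω => if Z ω = i ∧ V i ω = j.succ then (1:ℝ) else 0 from by
        funext ω; by_cases h1 : Z ω = i <;> by_cases h2 : V i ω = j.succ <;> simp [h1, h2]]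
      exact (aux_eq _ hmeas).symm
    have h2 : ∫ ω, (if Z ω = i then (1:ℝ) else 0) * (if V i ω = j.succ then (1:ℝ) else 0)
        = (volume {ω | Z ω = i}).toReal * ∫ ω, (if V i ω = j.succ then (1:ℝ) else 0) :=
      indep_factor hZ hindep i (fun p => if p.1 i = j.succ then (1:ℝ) else 0)
        ((measurable_of_countable (fun v : Fin (n+1) => if v = j.succ then (1:ℝ) else 0)).comp
          ((measurable_pi_apply i).comp measurable_fst))
        (aux_int _ (hVm i j.succ))
    rw [hset, h1, h2, mul_div_cancel_left₀ _ (hμ i)]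
  -- sum over j' of E[1(V_i = j') U_0] = E[U_0]
  have hsum0 : ∀ i : Fin m,
      ∑ j' : Fin (n+1), ∫ ω, (if V i ω = j' then (1:ℝ) else 0) * U 0 ω = ∫ ω, U 0 ω := by
    intro i
    rw [← integral_finset_sum _ (fun j' _ => hprod i j' 0)]
    congr 1; funext ω
    have hterm : ∀ j' : Fin (n+1),
        (if V i ω = j' then (1:ℝ) else 0) * U 0 ω = if V i ω = j' then U 0 ω else 0 := by
      intro j'; split_ifs <;> simp
    simp only [hterm]
    rw [Finset.sum_ite_eq Finset.univ (V i ω) (fun _ => U 0 ω)]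
    simp
  -- expansion of correlation integral
  have hexp : ∀ (i k : Fin m) (j : Fin n),
      ∫ ω, (U j.succ ω - U 0 ω) *
          ((if V i ω = j.succ then (1:ℝ) else 0) - (if V k ω = j.succ then (1:ℝ) else 0))
        = ((∫ ω, (if V i ω = j.succ then (1:ℝ) else 0) * U j.succ ω)
            - ∫ ω, (if V i ω = j.succ then (1:ℝ) else 0) * U 0 ω)
          - ((∫ ω, (if V k ω = j.succ then (1:ℝ) else 0) * U j.succ ω)
            - ∫ ω, (if V k ω = j.succ then (1:ℝ) else 0) * U 0 ω) := by
    intro i k j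
    have i12 : Integrable (fun ω => (if V i ω = j.succ then (1:ℝ) else 0) * U j.succ ω
        - (if V i ω = j.succ then (1:ℝ) else 0) * U 0 ω) :=
      (hprod i j.succ j.succ).sub (hprod i j.succ 0)
    have i34 : Integrable (fun ω => (if V k ω = j.succ then (1:ℝ) else 0) * U j.succ ω
        - (if V k ω = j.succ then (1:ℝ) else 0) * U 0 ω) :=
      (hprod k j.succ j.succ).sub (hprod k j.succ 0)
    rw [show (fun ω => (U j.succ ω - U 0 ω) *
        ((if V i ω = j.succ then (1:ℝ) else 0) - (if V k ω = j.succ then (1:ℝ) else 0)))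
        = fun ω => ((if V i ω = j.succ then (1:ℝ) else 0) * U j.succ ω
            - (if V i ω = j.succ then (1:ℝ) else 0) * U 0 ω)
          - ((if V k ω = j.succ then (1:ℝ) else 0) * U j.succ ω
            - (if V k ω = j.succ then (1:ℝ) else 0) * U 0 ω) from by funext ω; ring]
    rw [integral_sub i12 i34, integral_sub (hprod i j.succ j.succ) (hprod i j.succ 0),
      integral_sub (hprod k j.succ j.succ) (hprod k j.succ 0)]
  have hDint : ∀ (i k : Fin m) (j : Fin n),
      ∫ ω, ((if V i ω = j.succ then (1:ℝ) else 0) - (if V k ω = j.succ then (1:ℝ) else 0))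
        = (∫ ω, (if V i ω = j.succ then (1:ℝ) else 0))
          - ∫ ω, (if V k ω = j.succ then (1:ℝ) else 0) :=
    fun i k j => integral_sub (aux_int _ (hVm i j.succ)) (aux_int _ (hVm k j.succ))
  -- key rearrangement of the sum over Fin (n+1)
  have hkey : ∀ i : Fin m,
      ∑ j' : Fin (n+1), ∫ ω, (if V i ω = j' then (1:ℝ) else 0) * U j' ω
        = (∑ j : Fin n, ((∫ ω, (if V i ω = j.succ then (1:ℝ) else 0) * U j.succ ω)
            - ∫ ω, (if V i ω = j.succ then (1:ℝ) else 0) * U 0 ω)) + ∫ ω, U 0 ω := by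
    intro i
    calc ∑ j' : Fin (n+1), ∫ ω, (if V i ω = j' then (1:ℝ) else 0) * U j' ω
        = ∑ j' : Fin (n+1), (((∫ ω, (if V i ω = j' then (1:ℝ) else 0) * U j' ω)
            - ∫ ω, (if V i ω = j' then (1:ℝ) else 0) * U 0 ω)
            + ∫ ω, (if V i ω = j' then (1:ℝ) else 0) * U 0 ω) := by
          apply Finset.sum_congr rfl; intro j' _; ring
      _ = (∑ j' : Fin (n+1), ((∫ ω, (if V i ω = j' then (1:ℝ) else 0) * U j' ω)
            - ∫ ω, (if V i ω = j' then (1:ℝ) else 0) * U 0 ω))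
          + ∑ j' : Fin (n+1), ∫ ω, (if V i ω = j' then (1:ℝ) else 0) * U 0 ω :=
          Finset.sum_add_distrib
      _ = (∑ j : Fin n, ((∫ ω, (if V i ω = j.succ then (1:ℝ) else 0) * U j.succ ω)
            - ∫ ω, (if V i ω = j.succ then (1:ℝ) else 0) * U 0 ω)) + ∫ ω, U 0 ω := by
          rw [hsum0 i, Fin.sum_univ_succ (fun j' : Fin (n+1) =>
            ((∫ ω, (if V i ω = j' then (1:ℝ) else 0) * U j' ω)
              - ∫ ω, (if V i ω = j' then (1:ℝ) else 0) * U 0 ω))]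
          simp
  -- main identity
  have hmain : ∀ s ∈ S₀, ∑ j, a s j * θ j = b s := by
    intro s hs
    rw [hb s, hSY s.1, hSY s.2, hkey s.1, hkey s.2]
    have hterm : ∀ j : Fin n, a s j * θ j
        = ((∫ ω, (if V s.1 ω = j.succ then (1:ℝ) else 0) * U j.succ ω)
            - ∫ ω, (if V s.1 ω = j.succ then (1:ℝ) else 0) * U 0 ω)
          - ((∫ ω, (if V s.2 ω = j.succ then (1:ℝ) else 0) * U j.succ ω)
            - ∫ ω, (if V s.2 ω = j.succ then (1:ℝ) else 0) * U 0 ω) := by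
      intro j
      have h := hcorr s hs j
      rw [hexp s.1 s.2 j, hDint s.1 s.2 j] at h
      rw [ha s j, haD s.1 j, haD s.2 j, hθ j, mul_comm]
      exact h.symm
    rw [Finset.sum_congr rfl (fun j _ => hterm j), Finset.sum_sub_distrib]
    ring
  refine ⟨hmain, ?_⟩
  intro c hc
  apply hrank
  funext s
  show ∑ j, a s.1 j * c j = ∑ j, a s.1 j * θ j
  rw [hc s.1 s.2, hmain s.1 s.2]
end

section
/- (Theorem 2.) Suppose that for every pair z, z' ∈ [0,1] and every j ∈ {1, …, n}, E[(1(V(z') = j) − 1(V(z) = j)) · (U_j − U_0)] = E[1(V(z') = j) − 1(V(z) = j)] · E[U_j − U_0]. Suppose each q_j is differentiable on [0,1] with derivative a_j = q_j'. Then μ is differentiable on [0,1] and μ'(z) = Σ_{j=1}^{n} θ_j · a_j(z) for all z ∈ [0,1]. Moreover, if the functions a_1, …, a_n are linearly independent (i.e. Σ_j c_j a_j(z) = 0 for all z ∈ [0,1] implies c_1 = ⋯ = c_n = 0), then θ is the unique vector c ∈ ℝⁿ with μ'(z) = Σ_j c_j a_j(z) for all z ∈ [0,1]; hence θ is identifiable.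 -/
open MeasureTheory

/-- Theorem 2: under the zero-correlation condition for all pairs `z, z' ∈ [0,1]`,
if each `q_j` is differentiable on `[0,1]` with derivative `a_j`, then `μ` is differentiable
on `[0,1]` with `μ'(z) = ∑_j θ_j a_j(z)`; and if the `a_j` are linearly independent, `θ` is the
unique vector `c` with `μ'(z) = ∑_j c_j a_j(z)` on `[0,1]`, hence identifiable. -/
theorem stmt_5 {Ω : Type*} [MeasureSpace Ω] [IsProbabilityMeasure (volume : Measure Ω)]
    (n : ℕ) (hn : 1 ≤ n)
    (V : ℝ → Ω → Fin (n + 1)) (hV : ∀ z, Measurable (V z))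
    (U : Fin (n + 1) → Ω → ℝ) (hU : ∀ j, Integrable (U j))
    (hprod : ∀ z j j', Integrable (fun ω => (if V z ω = j then (1 : ℝ) else 0) * U j' ω))
    (θ : Fin n → ℝ) (hθ : ∀ j : Fin n, θ j = ∫ ω, (U j.succ ω - U 0 ω))
    (μ : ℝ → ℝ) (hμ : ∀ z, μ z = ∫ ω, U (V z ω) ω)
    (q : Fin (n + 1) → ℝ → ℝ) (hq : ∀ j z, q j z = (volume {ω | V z ω = j}).toReal)
    (hcorr : ∀ z ∈ Set.Icc (0 : ℝ) 1, ∀ z' ∈ Set.Icc (0 : ℝ) 1, ∀ j : Fin n,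
      ∫ ω, ((if V z' ω = j.succ then (1 : ℝ) else 0) - (if V z ω = j.succ then (1 : ℝ) else 0))
          * (U j.succ ω - U 0 ω)
        = (∫ ω, ((if V z' ω = j.succ then (1 : ℝ) else 0)
              - (if V z ω = j.succ then (1 : ℝ) else 0)))
          * ∫ ω, (U j.succ ω - U 0 ω))
    (a : Fin n → ℝ → ℝ)
    (hdiff : ∀ j : Fin n, ∀ z ∈ Set.Icc (0 : ℝ) 1,
      HasDerivWithinAt (q j.succ) (a j z) (Set.Icc (0 : ℝ) 1) z) :
    (∀ z ∈ Set.Icc (0 : ℝ) 1,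
      HasDerivWithinAt μ (∑ j : Fin n, θ j * a j z) (Set.Icc (0 : ℝ) 1) z) ∧
    ((∀ c : Fin n → ℝ, (∀ z ∈ Set.Icc (0 : ℝ) 1, ∑ j : Fin n, c j * a j z = 0) → c = 0) →
      ∀ c : Fin n → ℝ,
        (∀ z ∈ Set.Icc (0 : ℝ) 1,
          HasDerivWithinAt μ (∑ j : Fin n, c j * a j z) (Set.Icc (0 : ℝ) 1) z) → c = θ) := by
  classical
  have hmeas : ∀ z (j : Fin (n+1)), MeasurableSet {ω | V z ω = j} := fun z j =>
    (hV z) (measurableSet_singleton j)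
  -- integrability of indicators
  have hindInt : ∀ z (j : Fin (n+1)),
      Integrable (fun ω => (if V z ω = j then (1:ℝ) else 0)) := by
    intro z j
    have h : (fun ω => (if V z ω = j then (1:ℝ) else 0))
        = Set.indicator {ω | V z ω = j} (fun _ => (1:ℝ)) := by
      ext ω; simp [Set.indicator_apply, Set.mem_setOf_eq]
    rw [h]
    exact (integrable_const (1:ℝ)).indicator (hmeas z j)
  have hindI : ∀ z (j : Fin (n+1)),
      (∫ ω, (if V z ω = j then (1:ℝ) else 0)) = q j z := by
    intro z j
    have h : (fun ω => (if V z ω = j then (1:ℝ) else 0))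
        = Set.indicator {ω | V z ω = j} (fun _ => (1:ℝ)) := by
      ext ω; simp [Set.indicator_apply, Set.mem_setOf_eq]
    rw [h, integral_indicator_const (1:ℝ) (hmeas z j), hq]
    simp
    rfl
  -- integrability of indicator * (U j.succ - U 0)
  have hInt : ∀ z (j : Fin n),
      Integrable (fun ω => (if V z ω = j.succ then (1:ℝ) else 0) * (U j.succ ω - U 0 ω)) := by
    intro z j
    have := (hprod z j.succ j.succ).sub (hprod z j.succ 0)
    simpa [mul_sub, Pi.sub_def] using this
  -- pointwise decomposition
  have hpt : ∀ z ω, U (V z ω) ω =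
      U 0 ω + ∑ j : Fin n, (if V z ω = j.succ then (1:ℝ) else 0) * (U j.succ ω - U 0 ω) := by
    intro z ω
    rcases Fin.eq_zero_or_eq_succ (V z ω) with h | ⟨k, h⟩
    · rw [h]
      simp [Fin.succ_ne_zero, (Fin.succ_ne_zero _).symm]
    · rw [h]
      rw [Finset.sum_eq_single k]
      · simp
      · intro b _ hb
        have : k.succ ≠ b.succ := by
          simp [Fin.succ_inj]; exact fun hh => hb hh.symm
        simp [this]
      · simp
  -- integral decomposition of μ
  have hμ' : ∀ z, μ z = (∫ ω, U 0 ω)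
      + ∑ j : Fin n, ∫ ω, (if V z ω = j.succ then (1:ℝ) else 0) * (U j.succ ω - U 0 ω) := by
    intro z
    rw [hμ]
    calc ∫ ω, U (V z ω) ω
        = ∫ ω, (U 0 ω + ∑ j : Fin n,
            (if V z ω = j.succ then (1:ℝ) else 0) * (U j.succ ω - U 0 ω)) := by
          exact integral_congr_ae (Filter.Eventually.of_forall (hpt z))
      _ = _ := by
          rw [integral_add (hU 0) (integrable_finset_sum _ (fun j _ => hInt z j)),
            integral_finset_sum _ (fun j _ => hInt z j)]
  -- difference formula
  have hdiffμ : ∀ z ∈ Set.Icc (0:ℝ) 1, ∀ z' ∈ Set.Icc (0:ℝ) 1,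
      μ z' - μ z = ∑ j : Fin n, θ j * (q j.succ z' - q j.succ z) := by
    intro z hz z' hz'
    rw [hμ' z, hμ' z']
    rw [add_sub_add_left_eq_sub, ← Finset.sum_sub_distrib]
    refine Finset.sum_congr rfl (fun j _ => ?_)
    rw [← integral_sub (hInt z' j) (hInt z j)]
    have h1 : (fun ω => (if V z' ω = j.succ then (1:ℝ) else 0) * (U j.succ ω - U 0 ω)
        - (if V z ω = j.succ then (1:ℝ) else 0) * (U j.succ ω - U 0 ω))
        = fun ω => ((if V z' ω = j.succ then (1:ℝ) else 0)
            - (if V z ω = j.succ then (1:ℝ) else 0)) * (U j.succ ω - U 0 ω) := by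
      funext ω; ring
    rw [h1, hcorr z hz z' hz' j,
      integral_sub (hindInt z' j.succ) (hindInt z j.succ), hindI, hindI, ← hθ]
    ring
  have h01 : (0:ℝ) ∈ Set.Icc (0:ℝ) 1 := ⟨le_refl _, zero_le_one⟩
  have key : ∀ z ∈ Set.Icc (0:ℝ) 1,
      μ z = μ 0 + ∑ j : Fin n, θ j * (q j.succ z - q j.succ 0) := by
    intro z hz
    have := hdiffμ 0 h01 z hz
    linarith [this]
  have part1 : ∀ z ∈ Set.Icc (0:ℝ) 1,
      HasDerivWithinAt μ (∑ j : Fin n, θ j * a j z) (Set.Icc (0:ℝ) 1) z := by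
    intro z hz
    have hg : HasDerivWithinAt
        (fun x => μ 0 + ∑ j : Fin n, θ j * (q j.succ x - q j.succ 0))
        (∑ j : Fin n, θ j * a j z) (Set.Icc (0:ℝ) 1) z := by
      apply HasDerivWithinAt.const_add
      exact HasDerivWithinAt.fun_sum (fun j _ =>
        (((hdiff j z hz).sub_const _).const_mul (θ j)))
    exact hg.congr (fun x hx => key x hx) (key z hz)
  refine ⟨part1, ?_⟩
  intro hindep c hc
  have heq : ∀ z ∈ Set.Icc (0:ℝ) 1,
      ∑ j : Fin n, c j * a j z = ∑ j : Fin n, θ j * a j z := by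
    intro z hz
    have hu : UniqueDiffWithinAt ℝ (Set.Icc (0:ℝ) 1) z :=
      (uniqueDiffOn_Icc zero_lt_one) z hz
    rw [← (hc z hz).derivWithin hu, ← (part1 z hz).derivWithin hu]
  have hz0 : (fun j => c j - θ j) = 0 := by
    apply hindep
    intro z hz
    have h := heq z hz
    simp only [sub_mul, Finset.sum_sub_distrib]
    rw [h]; ring
  funext j
  have := congrFun hz0 j
  simp only [Pi.zero_apply] at this
  linarith
end

section
/- (Chain rule under the expectation, the core computation in the proof of Theorem 3.) The function z ↦ E[f(g(z, U), U)] is differentiable on ℝ, with derivative (d/dz) E[f(g(z, U), U)] = E[(∂f/∂x)(g(z, U), U) · (∂g/∂z)(z, U)] for every z ∈ ℝ. -/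
open MeasureTheory

/-- Chain rule under the expectation, core computation in the proof of Theorem 3:
`z ↦ E[f(g(z,U),U)]` is differentiable with derivative `E[(∂f/∂x)(g(z,U),U) · (∂g/∂z)(z,U)]`. -/
theorem stmt_6 {Ω : Type*} [MeasureSpace Ω] [IsProbabilityMeasure (volume : Measure Ω)]
    {E : Type*} [MeasurableSpace E] (U : Ω → E) (hU : Measurable U)
    (f f' g g' : ℝ × E → ℝ) (C : ℝ)
    (hfm : Measurable f) (hf'm : Measurable f') (hgm : Measurable g) (hg'm : Measurable g')
    (hfd : ∀ u x, HasDerivAt (fun x => f (x, u)) (f' (x, u)) x)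
    (hf'c : ∀ u, Continuous fun x => f' (x, u))
    (hgd : ∀ u z, HasDerivAt (fun z => g (z, u)) (g' (z, u)) z)
    (hfb : ∀ x u, |f (x, u)| ≤ C) (hf'b : ∀ x u, |f' (x, u)| ≤ C)
    (hg'b : ∀ z u, |g' (z, u)| ≤ C) :
    ∀ z : ℝ, HasDerivAt (fun z => ∫ ω, f (g (z, U ω), U ω))
      (∫ ω, f' (g (z, U ω), U ω) * g' (z, U ω)) z := by
  intro z₀
  have hmeasF : ∀ z : ℝ, Measurable fun ω => f (g (z, U ω), U ω) := fun z =>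
    hfm.comp ((hgm.comp (measurable_const.prodMk hU)).prodMk hU)
  have hmeasF' : ∀ z : ℝ, Measurable fun ω => f' (g (z, U ω), U ω) * g' (z, U ω) := fun z =>
    (hf'm.comp ((hgm.comp (measurable_const.prodMk hU)).prodMk hU)).mul
      (hg'm.comp (measurable_const.prodMk hU))
  have key := hasDerivAt_integral_of_dominated_loc_of_deriv_le (F := fun z ω => f (g (z, U ω), U ω))
      (F' := fun z ω => f' (g (z, U ω), U ω) * g' (z, U ω)) (x₀ := z₀) (μ := (volume : Measure Ω))
      (bound := fun _ => C * C) (s := Metric.ball z₀ 1) (Metric.ball_mem_nhds z₀ one_pos)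
      (Filter.Eventually.of_forall fun z => (hmeasF z).aestronglyMeasurable)
      ?_ (hmeasF' z₀).aestronglyMeasurable ?_ (integrable_const _) ?_
  · exact key.2
  · exact (integrable_const C).mono' (hmeasF z₀).aestronglyMeasurable
      (Filter.Eventually.of_forall fun ω => by
        simpa [Real.norm_eq_abs, abs_of_nonneg (le_trans (abs_nonneg _) (hfb 0 (U ω)))]
          using hfb (g (z₀, U ω)) (U ω))
  · refine Filter.Eventually.of_forall fun ω z _ => ?_
    have hC : 0 ≤ C := le_trans (abs_nonneg _) (hfb 0 (U ω))
    calc ‖f' (g (z, U ω), U ω) * g' (z, U ω)‖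
        = |f' (g (z, U ω), U ω)| * |g' (z, U ω)| := abs_mul _ _
      _ ≤ C * C := mul_le_mul (hf'b _ _) (hg'b _ _) (abs_nonneg _) hC
  · refine Filter.Eventually.of_forall fun ω z _ => ?_
    exact (hfd (U ω) (g (z, U ω))).comp z (hgd (U ω) z)
end

section
/- (Theorem 3, scalar case.) Suppose in addition that for every z ∈ ℝ, E[(∂f/∂x)(g(z, U), U) · (∂g/∂z)(z, U)] = E[(∂f/∂x)(g(z, U), U)] · E[(∂g/∂z)(z, U)] (i.e. ∂Y/∂X and ∂X/∂Z are uncorrelated conditional on Z = z). Define a(z) = E[(∂g/∂z)(z, U)] and φ(z) = E[(∂f/∂x)(g(z, U), U)]. Then the function z ↦ E[f(g(z, U), U)] is differentiable, its derivative b(z) satisfies a(z) · φ(z) = b(z) for every z, and consequently at every z with a(z) ≠ 0 one has φ(z) = b(z)/a(z), so φ(z) is identifiable. -/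
open MeasureTheory

/-- Theorem 3, scalar case: under the conditional zero-correlation of
`∂Y/∂X` and `∂X/∂Z` given `Z = z`, with `a(z) = E[(∂g/∂z)(z,U)]` and
`φ(z) = E[(∂f/∂x)(g(z,U),U)]`, the function `F(z) = E[f(g(z,U),U)]` is differentiable,
its derivative `b(z)` satisfies `a(z)·φ(z) = b(z)`, and wherever `a(z) ≠ 0`,
`φ(z) = b(z)/a(z)`, so `φ(z)` is identifiable. -/
theorem stmt_7 {Ω : Type*} [MeasureSpace Ω] [IsProbabilityMeasure (volume : Measure Ω)]
    {E : Type*} [MeasurableSpace E] (U : Ω → E) (hU : Measurable U)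
    (f f' g g' : ℝ × E → ℝ) (C : ℝ)
    (hfm : Measurable f) (hf'm : Measurable f') (hgm : Measurable g) (hg'm : Measurable g')
    (hfd : ∀ u x, HasDerivAt (fun x => f (x, u)) (f' (x, u)) x)
    (hf'c : ∀ u, Continuous fun x => f' (x, u))
    (hgd : ∀ u z, HasDerivAt (fun z => g (z, u)) (g' (z, u)) z)
    (hfb : ∀ x u, |f (x, u)| ≤ C) (hf'b : ∀ x u, |f' (x, u)| ≤ C)
    (hg'b : ∀ z u, |g' (z, u)| ≤ C)
    (hcorr : ∀ z : ℝ,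
      ∫ ω, f' (g (z, U ω), U ω) * g' (z, U ω)
        = (∫ ω, f' (g (z, U ω), U ω)) * ∫ ω, g' (z, U ω))
    (a φ : ℝ → ℝ)
    (ha : ∀ z, a z = ∫ ω, g' (z, U ω))
    (hφ : ∀ z, φ z = ∫ ω, f' (g (z, U ω), U ω)) :
    Differentiable ℝ (fun z => ∫ ω, f (g (z, U ω), U ω)) ∧
    (∀ z, a z * φ z = deriv (fun z => ∫ ω, f (g (z, U ω), U ω)) z) ∧
    (∀ z, a z ≠ 0 → φ z = deriv (fun z => ∫ ω, f (g (z, U ω), U ω)) z / a z) := by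
  -- measurability of the relevant maps in ω
  have hmeasF : ∀ z : ℝ, Measurable (fun ω => f (g (z, U ω), U ω)) := fun z =>
    hfm.comp (((hgm.comp (measurable_const.prodMk hU)).prodMk hU))
  have hmeasF' : ∀ z : ℝ,
      Measurable (fun ω => f' (g (z, U ω), U ω) * g' (z, U ω)) := fun z =>
    (hf'm.comp (((hgm.comp (measurable_const.prodMk hU)).prodMk hU))).mul
      (hg'm.comp (measurable_const.prodMk hU))
  -- key: HasDerivAt at every z
  have key : ∀ z : ℝ, HasDerivAt (fun z => ∫ ω, f (g (z, U ω), U ω))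
      (∫ ω, f' (g (z, U ω), U ω) * g' (z, U ω)) z := by
    intro z₀
    have h := hasDerivAt_integral_of_dominated_loc_of_deriv_le
      (F := fun z ω => f (g (z, U ω), U ω))
      (F' := fun z ω => f' (g (z, U ω), U ω) * g' (z, U ω))
      (μ := (volume : Measure Ω)) (x₀ := z₀) (bound := fun _ => C * C)
      (s := Metric.ball z₀ 1) (Metric.ball_mem_nhds z₀ one_pos)
      (Filter.Eventually.of_forall fun z => (hmeasF z).aestronglyMeasurable)
      ?_ ((hmeasF' z₀).aestronglyMeasurable) ?_ (integrable_const _) ?_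
    · exact h.2
    · refine ⟨(hmeasF z₀).aestronglyMeasurable, ?_⟩
      exact (hasFiniteIntegral_const C).mono'
        (Filter.Eventually.of_forall fun ω => by
          simpa [Real.norm_eq_abs] using hfb (g (z₀, U ω)) (U ω))
    · refine Filter.Eventually.of_forall fun ω z _ => ?_
      rw [Real.norm_eq_abs, abs_mul]
      have h1 := hf'b (g (z, U ω)) (U ω)
      have h2 := hg'b z (U ω)
      exact mul_le_mul h1 h2 (abs_nonneg _) ((abs_nonneg _).trans h1)
    · refine Filter.Eventually.of_forall fun ω z _ => ?_
      exact (hfd (U ω) (g (z, U ω))).comp z (hgd (U ω) z)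
  have hderiv : ∀ z, deriv (fun z => ∫ ω, f (g (z, U ω), U ω)) z
      = a z * φ z := by
    intro z
    rw [(key z).deriv, hcorr z, ha, hφ, mul_comm]
  refine ⟨fun z => (key z).differentiableAt, fun z => (hderiv z).symm, fun z hz => ?_⟩
  rw [hderiv z, mul_comm, mul_div_assoc, div_self hz, mul_one]
end

section
/- (Theorem 3, vector case.) Suppose that for every z ∈ ℝᵐ and all i ∈ {1, …, m}, j ∈ {1, …, n}, E[(∂f/∂x_j)(g(z, U), U) · (∂g_j/∂z_i)(z, U)] = E[(∂f/∂x_j)(g(z, U), U)] · E[(∂g_j/∂z_i)(z, U)] (componentwise zero correlation, conditional on Z = z). Define the m × n matrix a(z) with entries a(z)_{i j} = E[(∂g_j/∂z_i)(z, U)] and the vector φ(z) ∈ ℝⁿ with components φ(z)_j = E[(∂f/∂x_j)(g(z, U), U)]. Then the function F(z) = E[f(g(z, U), U)] is differentiable on ℝᵐ and its gradient b(z) ∈ ℝᵐ satisfies b(z)_i = Σ_{j=1}^{n} a(z)_{i j} φ(z)_j for all i, i.e. a(z) φ(z) = b(z). Moreover, if rank(a(z)) ≥ n (the linear map v ↦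 a(z) v from ℝⁿ to ℝᵐ is injective), then φ(z) is the unique vector v ∈ ℝⁿ with a(z) v = b(z), so φ(z) is identifiable. -/
open MeasureTheory

/-- Theorem 3, vector case: with `a(z)_{ij} = E[(∂g_j/∂z_i)(z,U)]`,
`φ(z)_j = E[(∂f/∂x_j)(g(z,U),U)]` and `b(z)_i = ∑_j a(z)_{ij} φ(z)_j`, under componentwise
conditional zero correlation the function `F(z) = E[f(g(z,U),U)]` is differentiable with
gradient `b(z)`, i.e. `a(z) φ(z) = b(z)`; and if `rank(a(z)) ≥ n` (the map `v ↦ a(z)v` is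
injective) then `φ(z)` is the unique solution `v` of `a(z) v = b(z)`, hence identifiable. -/
theorem stmt_8 {Ω : Type*} [MeasureSpace Ω] [IsProbabilityMeasure (volume : Measure Ω)]
    {E : Type*} [MeasurableSpace E] (U : Ω → E) (hU : Measurable U)
    (n m : ℕ) (hn : 1 ≤ n) (hm : 1 ≤ m)
    (f : (Fin n → ℝ) × E → ℝ) (g : (Fin m → ℝ) × E → Fin n → ℝ)
    (f' : Fin n → (Fin n → ℝ) × E → ℝ) (g' : Fin m → Fin n → (Fin m → ℝ) × E → ℝ)
    (C : ℝ)
    (hfm : Measurable f) (hgm : Measurable g)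
    (hf'm : ∀ j, Measurable (f' j)) (hg'm : ∀ i j, Measurable (g' i j))
    (hfd : ∀ u x, HasFDerivAt (fun x => f (x, u))
      (∑ j : Fin n, f' j (x, u) • (ContinuousLinearMap.proj j : (Fin n → ℝ) →L[ℝ] ℝ)) x)
    (hf'c : ∀ j u, Continuous fun x => f' j (x, u))
    (hgd : ∀ u z j, HasFDerivAt (fun z => g (z, u) j)
      (∑ i : Fin m, g' i j (z, u) • (ContinuousLinearMap.proj i : (Fin m → ℝ) →L[ℝ] ℝ)) z)
    (hg'c : ∀ i j u, Continuous fun z => g' i j (z, u))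
    (hfb : ∀ x u, |f (x, u)| ≤ C) (hf'b : ∀ j x u, |f' j (x, u)| ≤ C)
    (hg'b : ∀ i j z u, |g' i j (z, u)| ≤ C)
    (hcorr : ∀ (z : Fin m → ℝ) (i : Fin m) (j : Fin n),
      ∫ ω, f' j (g (z, U ω), U ω) * g' i j (z, U ω)
        = (∫ ω, f' j (g (z, U ω), U ω)) * ∫ ω, g' i j (z, U ω))
    (a : (Fin m → ℝ) → Fin m → Fin n → ℝ)
    (ha : ∀ z i j, a z i j = ∫ ω, g' i j (z, U ω))
    (φ : (Fin m → ℝ) → Fin n → ℝ)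
    (hφ : ∀ z j, φ z j = ∫ ω, f' j (g (z, U ω), U ω))
    (b : (Fin m → ℝ) → Fin m → ℝ)
    (hb : ∀ z i, b z i = ∑ j : Fin n, a z i j * φ z j) :
    (∀ z : Fin m → ℝ, HasFDerivAt (fun z => ∫ ω, f (g (z, U ω), U ω))
      (∑ i : Fin m, b z i • (ContinuousLinearMap.proj i : (Fin m → ℝ) →L[ℝ] ℝ)) z) ∧
    ∀ z : Fin m → ℝ,
      Function.Injective (fun v : Fin n → ℝ => fun i : Fin m => ∑ j : Fin n, a z i j * v j) →
        ∀ v : Fin n → ℝ, (∀ i : Fin m, ∑ j : Fin n, a z i j * v j = b z i) → v = φ z := by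
  classical
  have key : ∀ z : Fin m → ℝ, HasFDerivAt (fun z => ∫ ω, f (g (z, U ω), U ω))
      (∑ i : Fin m, b z i • (ContinuousLinearMap.proj i : (Fin m → ℝ) →L[ℝ] ℝ)) z := by
    intro z₀
    set D : (Fin m → ℝ) → Ω → (Fin m → ℝ) →L[ℝ] ℝ := fun z ω =>
      ∑ i : Fin m, ∑ j : Fin n, (f' j (g (z, U ω), U ω) * g' i j (z, U ω)) •
        (ContinuousLinearMap.proj i : (Fin m → ℝ) →L[ℝ] ℝ) with hD
    have hmeasF : ∀ z : Fin m → ℝ,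
        AEStronglyMeasurable (fun ω => f (g (z, U ω), U ω)) volume := fun z =>
      (hfm.comp (((hgm.comp (measurable_const.prodMk hU))).prodMk hU)).aestronglyMeasurable
    have hmeas_s : ∀ (z : Fin m → ℝ) (i : Fin m) (j : Fin n),
        Measurable (fun ω => f' j (g (z, U ω), U ω) * g' i j (z, U ω)) := fun z i j =>
      ((hf'm j).comp ((hgm.comp (measurable_const.prodMk hU)).prodMk hU)).mul
        ((hg'm i j).comp (measurable_const.prodMk hU))
    have hint_s : ∀ (z : Fin m → ℝ) (i : Fin m) (j : Fin n),
        Integrable (fun ω => f' j (g (z, U ω), U ω) * g' i j (z, U ω)) := by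
      intro z i j
      refine ⟨(hmeas_s z i j).aestronglyMeasurable,
        HasFiniteIntegral.of_bounded (C := C * C) (ae_of_all _ fun ω => ?_)⟩
      have hC : 0 ≤ C := (abs_nonneg _).trans (hf'b j (g (z, U ω)) (U ω))
      simp only [Real.norm_eq_abs, abs_mul]
      exact mul_le_mul (hf'b _ _ _) (hg'b _ _ _ _) (abs_nonneg _) hC
    have hprojnorm : ∀ i : Fin m, ‖(ContinuousLinearMap.proj i : (Fin m → ℝ) →L[ℝ] ℝ)‖ ≤ 1 := by
      intro i
      refine ContinuousLinearMap.opNorm_le_bound _ zero_le_one fun v => ?_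
      simpa using norm_le_pi_norm v i
    have hderiv : ∀ (ω : Ω) (z : Fin m → ℝ),
        HasFDerivAt (fun z => f (g (z, U ω), U ω)) (D z ω) z := by
      intro ω z
      have hg : HasFDerivAt (fun z => g (z, U ω))
          (ContinuousLinearMap.pi fun j => ∑ i : Fin m, g' i j (z, U ω) •
            (ContinuousLinearMap.proj i : (Fin m → ℝ) →L[ℝ] ℝ)) z :=
        hasFDerivAt_pi.2 fun j => hgd (U ω) z j
      have hcomp := (hfd (U ω) (g (z, U ω))).comp z hg
      refine HasFDerivAt.congr_fderiv hcomp ?_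
      symm
      ext v
      simp only [hD, ContinuousLinearMap.coe_sum', Finset.sum_apply,
        ContinuousLinearMap.coe_smul', Pi.smul_apply, ContinuousLinearMap.proj_apply,
        smul_eq_mul, ContinuousLinearMap.coe_comp', Function.comp_apply,
        ContinuousLinearMap.pi_apply]
      rw [Finset.sum_comm]
      refine Finset.sum_congr rfl fun j _ => ?_
      rw [Finset.mul_sum]
      refine Finset.sum_congr rfl fun i _ => ?_
      ring
    have hbound : ∀ᵐ ω, ∀ z ∈ Metric.ball z₀ 1, ‖D z ω‖ ≤ (n * m) * (C * C) := by
      refine ae_of_all _ fun ω z _ => ?_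
      have hC : 0 ≤ C := (abs_nonneg _).trans (hf'b ⟨0, hn⟩ (g (z, U ω)) (U ω))
      calc ‖D z ω‖ ≤ ∑ i : Fin m, ∑ j : Fin n,
            ‖(f' j (g (z, U ω), U ω) * g' i j (z, U ω)) •
              (ContinuousLinearMap.proj i : (Fin m → ℝ) →L[ℝ] ℝ)‖ :=
          (norm_sum_le _ _).trans (Finset.sum_le_sum fun i _ => norm_sum_le _ _)
        _ ≤ ∑ i : Fin m, ∑ j : Fin n, C * C := by
          refine Finset.sum_le_sum fun i _ => Finset.sum_le_sum fun j _ => ?_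
          rw [norm_smul (f' j (g (z, U ω), U ω) * g' i j (z, U ω))
            (ContinuousLinearMap.proj i : (Fin m → ℝ) →L[ℝ] ℝ)]
          have h1 : ‖f' j (g (z, U ω), U ω) * g' i j (z, U ω)‖ ≤ C * C := by
            rw [Real.norm_eq_abs, abs_mul]
            exact mul_le_mul (hf'b _ _ _) (hg'b _ _ _ _) (abs_nonneg _) hC
          calc ‖f' j (g (z, U ω), U ω) * g' i j (z, U ω)‖ *
                ‖(ContinuousLinearMap.proj i : (Fin m → ℝ) →L[ℝ] ℝ)‖
              ≤ (C * C) * 1 :=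
                mul_le_mul h1 (hprojnorm i) (norm_nonneg _) (by positivity)
            _ = C * C := mul_one _
        _ = (n * m) * (C * C) := by simp [Finset.sum_const]; ring
    have hF'meas : AEStronglyMeasurable (D z₀) volume := by
      refine Finset.aestronglyMeasurable_fun_sum _ fun i _ => ?_
      refine Finset.aestronglyMeasurable_fun_sum _ fun j _ => ?_
      exact (hmeas_s z₀ i j).aestronglyMeasurable.smul_const _
    have hF_int : Integrable (fun ω => f (g (z₀, U ω), U ω)) := by
      refine ⟨hmeasF z₀, HasFiniteIntegral.of_bounded (C := C) (ae_of_all _ fun ω => ?_)⟩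
      simpa [Real.norm_eq_abs] using hfb (g (z₀, U ω)) (U ω)
    have main := hasFDerivAt_integral_of_dominated_of_fderiv_le (𝕜 := ℝ)
      (F := fun z ω => f (g (z, U ω), U ω)) (F' := D) (bound := fun _ => (n * m) * (C * C))
      (Metric.ball_mem_nhds z₀ one_pos) (Filter.Eventually.of_forall fun z => hmeasF z) hF_int hF'meas hbound
      (integrable_const _) (ae_of_all _ fun ω z _ => hderiv ω z)
    have hint_eq : (∫ ω, D z₀ ω) =
        ∑ i : Fin m, b z₀ i • (ContinuousLinearMap.proj i : (Fin m → ℝ) →L[ℝ] ℝ) := by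
      rw [hD]
      rw [integral_finset_sum _ fun i _ => integrable_finset_sum _ fun j _ =>
        (hint_s z₀ i j).smul_const _]
      refine Finset.sum_congr rfl fun i _ => ?_
      rw [integral_finset_sum _ fun j _ => (hint_s z₀ i j).smul_const _]
      have : ∀ j : Fin n, (∫ ω, (f' j (g (z₀, U ω), U ω) * g' i j (z₀, U ω)) •
          (ContinuousLinearMap.proj i : (Fin m → ℝ) →L[ℝ] ℝ))
          = (a z₀ i j * φ z₀ j) • (ContinuousLinearMap.proj i : (Fin m → ℝ) →L[ℝ] ℝ) := by
        intro j
        rw [integral_smul_const, hcorr z₀ i j, ha, hφ, mul_comm]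
      rw [Finset.sum_congr rfl fun j _ => this j, ← Finset.sum_smul, ← hb]
    rw [hint_eq] at main
    exact main
  refine ⟨key, fun z hinj v hv => ?_⟩
  apply hinj
  funext i
  simp only []
  rw [hv i, hb]
end

section
/- (Example 4.) The function z ↦ E[s(t(z) + U₂)] is differentiable on ℝ with derivative (d/dz) E[s(t(z) + U₂)] = t'(z) · E[s'(t(z) + U₂)] for every z ∈ ℝ. Consequently, at every z with t'(z) ≠ 0, E[s'(t(z) + U₂)] = b(z)/a(z), where b(z) = (d/dz) E[s(t(z) + U₂)] and a(z) = t'(z); that is, in the model Y = s(X) + U₁, X = t(Z) + U₂ with Z independent of (U₁, U₂), the conditional expectation E(s'(X) | Z = z) = E(∂Y/∂X | Z = z) is identified as b(z)/a(z). -/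
open MeasureTheory

/-- Example 4: `z ↦ E[s(t(z) + U₂)]` is differentiable with derivative
`t'(z) · E[s'(t(z) + U₂)]`; consequently, wherever `t'(z) ≠ 0`,
`E[s'(t(z) + U₂)] = b(z)/a(z)` with `b(z)` the derivative of `z ↦ E[s(t(z) + U₂)]` and
`a(z) = t'(z)`, identifying `E(s'(X) | Z = z) = E(∂Y/∂X | Z = z)`. -/
theorem stmt_10 {Ω : Type*} [MeasureSpace Ω] [IsProbabilityMeasure (volume : Measure Ω)]
    (U₂ : Ω → ℝ) (hU₂ : Measurable U₂)
    (s t : ℝ → ℝ) (hs : ContDiff ℝ 1 s) (ht : ContDiff ℝ 1 t)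
    (C : ℝ) (hsb : ∀ x, |s x| ≤ C) (hs'b : ∀ x, |deriv s x| ≤ C) :
    (∀ z : ℝ, HasDerivAt (fun z => ∫ ω, s (t z + U₂ ω))
      (deriv t z * ∫ ω, deriv s (t z + U₂ ω)) z) ∧
    ∀ z : ℝ, deriv t z ≠ 0 →
      (∫ ω, deriv s (t z + U₂ ω))
        = deriv (fun z => ∫ ω, s (t z + U₂ ω)) z / deriv t z := by
  have hC : 0 ≤ C := le_trans (abs_nonneg _) (hsb 0)
  have hscont : Continuous s := hs.continuous
  have hs'cont : Continuous (deriv s) := hs.continuous_deriv le_rfl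
  have ht'cont : Continuous (deriv t) := ht.continuous_deriv le_rfl
  have key : ∀ z : ℝ, HasDerivAt (fun z => ∫ ω, s (t z + U₂ ω))
      (∫ ω, deriv t z * deriv s (t z + U₂ ω)) z := by
    intro z₀
    obtain ⟨M, hM⟩ := (isCompact_closedBall z₀ 1).exists_bound_of_continuousOn
      ht'cont.continuousOn
    have meas : ∀ z : ℝ, AEStronglyMeasurable (fun ω => s (t z + U₂ ω)) volume := fun z =>
      (hscont.measurable.comp (measurable_const.add hU₂)).aestronglyMeasurable
    have h := hasDerivAt_integral_of_dominated_loc_of_deriv_le (F := fun z ω => s (t z + U₂ ω))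
      (F' := fun z ω => deriv t z * deriv s (t z + U₂ ω)) (bound := fun _ => M * C)
      (μ := volume) (x₀ := z₀) (Metric.ball_mem_nhds z₀ one_pos)
      (Filter.Eventually.of_forall meas)
      ((integrable_const C).mono' (meas z₀)
        (Filter.Eventually.of_forall fun ω => by
          simpa using hsb (t z₀ + U₂ ω)))
      ((measurable_const.mul
        (hs'cont.measurable.comp (measurable_const.add hU₂))).aestronglyMeasurable)
      (Filter.Eventually.of_forall fun ω => fun z hz => by
        have h1 : ‖deriv t z‖ ≤ M := hM z (Metric.ball_subset_closedBall hz)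
        have : ‖deriv t z * deriv s (t z + U₂ ω)‖
            = ‖deriv t z‖ * |deriv s (t z + U₂ ω)| := by
          rw [norm_mul]; rfl
        rw [this]
        exact mul_le_mul h1 (hs'b _) (abs_nonneg _) ((norm_nonneg _).trans h1))
      (integrable_const _)
      (Filter.Eventually.of_forall fun ω => fun z _ => by
        have hti : HasDerivAt (fun z => t z + U₂ ω) (deriv t z) z :=
          ((ht.differentiable one_ne_zero z).hasDerivAt).add_const _
        have hso : HasDerivAt s (deriv s (t z + U₂ ω)) (t z + U₂ ω) :=
          (hs.differentiable one_ne_zero _).hasDerivAt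
        simpa [mul_comm, Function.comp_def] using hso.comp z hti)
    exact h.2
  have h1 : ∀ z : ℝ, HasDerivAt (fun z => ∫ ω, s (t z + U₂ ω))
      (deriv t z * ∫ ω, deriv s (t z + U₂ ω)) z := by
    intro z
    simpa [integral_const_mul] using key z
  refine ⟨h1, fun z hz => ?_⟩
  rw [(h1 z).deriv]
  field_simp
end
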